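/- In the relative neighborhood graph (RNG) on a finite set S with distinct pairwise distances, any two distinct neighbors q, r of a common node p satisfy: qr is strictly the longest side of triangle pqr, and hence the angle at p between edges pq and pr exceeds π/3. Consequently the degree of every node in the RNG is at most a constant depending only on the dimension d. -/

import Mathlib

open EuclideanGeometry

/-- The lune of `p` and `q`: intersection of the two open balls of radius `δ(p,q)`. -/
def lune {d : ℕ} (p q : EuclideanSpace ℝ (Fin d)) : Set (EuclideanSpace ℝ (Fin d)) :=
  Metric.ball p (dist p q) ∩ Metric.ball q (dist p q)

/-- An RNG neighbor relation on `S`: `x` and `y` are joined iff they are distinct and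
`lune(x,y)` contains no point of `S`. -/
def rngAdj {d : ℕ} (S : Finset (EuclideanSpace ℝ (Fin d)))
    (x y : EuclideanSpace ℝ (Fin d)) : Prop :=
  x ≠ y ∧ ∀ r ∈ S, r ∉ lune x y

lemma rng_cos_lt_half {d : ℕ} (p q r : EuclideanSpace ℝ (Fin d)) (hpq : p ≠ q) (hpr : p ≠ r)
    (h1 : dist q r > dist p q) (h2 : dist q r > dist p r) :
    Real.cos (∠ q p r) < 1/2 := by
  have law := EuclideanGeometry.law_cos q p r
  have ha : (0:ℝ) < dist q p := dist_pos.2 (fun h => hpq h.symm)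
  have hb : (0:ℝ) < dist r p := dist_pos.2 (fun h => hpr h.symm)
  have h1' : dist q r > dist q p := by rwa [dist_comm p q] at h1
  have h2' : dist q r > dist r p := by rwa [dist_comm p r] at h2
  nlinarith [mul_pos (sub_pos.2 (by nlinarith : dist q p * dist q p < dist q r * dist q r))
    (sub_pos.2 (by nlinarith : dist r p * dist r p < dist q r * dist q r)),
    sq_nonneg (dist q p - dist r p), mul_pos ha hb]

lemma rng_angle_gt {d : ℕ} (p q r : EuclideanSpace ℝ (Fin d)) (hpq : p ≠ q) (hpr : p ≠ r)
    (h1 : dist q r > dist p q) (h2 : dist q r > dist p r) :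
    ∠ q p r > Real.pi / 3 := by
  have hc := rng_cos_lt_half p q r hpq hpr h1 h2
  by_contra hle
  push_neg at hle
  have h0 : 0 ≤ ∠ q p r := EuclideanGeometry.angle_nonneg _ _ _
  have hm : Real.pi/3 ≤ Real.pi := by nlinarith [Real.pi_pos]
  rcases lt_or_eq_of_le hle with h | h
  · have := Real.strictAntiOn_cos ⟨h0, le_trans hle hm⟩ ⟨by positivity, hm⟩ h
    rw [Real.cos_pi_div_three] at this
    linarith
  · rw [h, Real.cos_pi_div_three] at hc; linarith

lemma rng_sep {d : ℕ} (x y : EuclideanSpace ℝ (Fin d)) (hx : x ≠ 0) (hy : y ≠ 0)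
    (hc : Real.cos (InnerProductGeometry.angle x y) < 1/2) :
    dist (‖x‖⁻¹ • x) (‖y‖⁻¹ • y) > 1 := by
  have hxn : (0:ℝ) < ‖x‖ := norm_pos_iff.2 hx
  have hyn : (0:ℝ) < ‖y‖ := norm_pos_iff.2 hy
  have hca : (inner ℝ x y : ℝ) / (‖x‖ * ‖y‖) < 1/2 := by
    rwa [InnerProductGeometry.cos_angle] at hc
  have hin : (inner ℝ x y : ℝ) < ‖x‖ * ‖y‖ / 2 := by
    rw [div_lt_iff₀ (by positivity)] at hca; linarith
  set u := ‖x‖⁻¹ • x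
  set v := ‖y‖⁻¹ • y
  have hu : ‖u‖ = 1 := by
    simp [u, norm_smul, abs_of_pos (inv_pos.2 hxn), inv_mul_cancel₀ hxn.ne']
  have hv : ‖v‖ = 1 := by
    simp [v, norm_smul, abs_of_pos (inv_pos.2 hyn), inv_mul_cancel₀ hyn.ne']
  have huv : (inner ℝ u v : ℝ) = ‖x‖⁻¹ * ‖y‖⁻¹ * inner ℝ x y := by
    rw [real_inner_smul_left, real_inner_smul_right]; ring
  have hsq : ‖u - v‖^2 > 1 := by
    rw [norm_sub_sq_real, hu, hv, huv]
    have : ‖x‖⁻¹ * ‖y‖⁻¹ * (inner ℝ x y : ℝ) < 1/2 := by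
      calc ‖x‖⁻¹ * ‖y‖⁻¹ * (inner ℝ x y : ℝ) < ‖x‖⁻¹ * ‖y‖⁻¹ * (‖x‖ * ‖y‖ / 2) := by
            apply mul_lt_mul_of_pos_left hin (by positivity)
        _ = 1/2 := by field_simp
    nlinarith
  rw [dist_eq_norm]
  nlinarith [norm_nonneg (u - v)]

lemma rng_angle_eq {d : ℕ} (p q r : EuclideanSpace ℝ (Fin d)) :
    ∠ q p r = InnerProductGeometry.angle (q - p) (r - p) := by
  rw [EuclideanGeometry.angle]; norm_num [vsub_eq_sub]

lemma rng_longest {d : ℕ} (S : Finset (EuclideanSpace ℝ (Fin d)))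
    (hdist : ∀ p ∈ S, ∀ q ∈ S, ∀ r ∈ S, ∀ s ∈ S,
        p ≠ q → r ≠ s → (p ≠ r ∨ q ≠ s) → (p ≠ s ∨ q ≠ r) → dist p q ≠ dist r s)
    (p : EuclideanSpace ℝ (Fin d)) (hp : p ∈ S) (q : EuclideanSpace ℝ (Fin d)) (hq : q ∈ S)
    (r : EuclideanSpace ℝ (Fin d)) (hr : r ∈ S) (haq : rngAdj S p q) (har : rngAdj S p r)
    (hqr : q ≠ r) : dist q r > dist p q ∧ dist q r > dist p r := by
  have hpq : p ≠ q := haq.1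
  have hpr : p ≠ r := har.1
  have hA := haq.2 r hr
  have hB := har.2 q hq
  simp only [lune, Set.mem_inter_iff, Metric.mem_ball, not_and_or, not_lt] at hA hB
  rw [dist_comm r p, dist_comm r q] at hA
  rw [dist_comm q p] at hB
  have hne1 : dist p r ≠ dist p q :=
    hdist p hp r hr p hp q hq hpr hpq (Or.inr hqr.symm) (Or.inl hpq)
  have hne2 : dist q r ≠ dist p q :=
    hdist q hq r hr p hp q hq hqr hpq (Or.inl hpq.symm) (Or.inr hpr.symm)
  have hne3 : dist q r ≠ dist p r :=
    hdist q hq r hr p hp r hr hqr hpr (Or.inl hpq.symm) (Or.inl hqr)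
  have hA' : dist p q < dist p r ∨ dist p q < dist q r := by
    rcases hA with h | h
    · exact Or.inl (lt_of_le_of_ne h hne1.symm)
    · exact Or.inr (lt_of_le_of_ne h hne2.symm)
  have hB' : dist p r < dist p q ∨ dist p r < dist q r := by
    rcases hB with h | h
    · exact Or.inl (lt_of_le_of_ne h hne1)
    · exact Or.inr (lt_of_le_of_ne h hne3.symm)
  rcases hA' with h | h <;> rcases hB' with h' | h' <;> constructor <;> linarith

theorem rng_angle_and_degree_bound (d : ℕ) :
    (∀ (S : Finset (EuclideanSpace ℝ (Fin d))),
      (∀ p ∈ S, ∀ q ∈ S, ∀ r ∈ S, ∀ s ∈ S,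
        p ≠ q → r ≠ s → (p ≠ r ∨ q ≠ s) → (p ≠ s ∨ q ≠ r) → dist p q ≠ dist r s) →
      ∀ p ∈ S, ∀ q ∈ S, ∀ r ∈ S, rngAdj S p q → rngAdj S p r → q ≠ r →
        (dist q r > dist p q ∧ dist q r > dist p r ∧ ∠ q p r > Real.pi / 3)) ∧
    (∃ K : ℕ, ∀ (S : Finset (EuclideanSpace ℝ (Fin d))),
      (∀ p ∈ S, ∀ q ∈ S, ∀ r ∈ S, ∀ s ∈ S,
        p ≠ q → r ≠ s → (p ≠ r ∨ q ≠ s) → (p ≠ s ∨ q ≠ r) → dist p q ≠ dist r s) →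
      ∀ p ∈ S, {x | x ∈ S ∧ rngAdj S p x}.ncard ≤ K) := by
  constructor
  · intro S hdist p hp q hq r hr haq har hqr
    obtain ⟨h1, h2⟩ := rng_longest S hdist p hp q hq r hr haq har hqr
    exact ⟨h1, h2, rng_angle_gt p q r haq.1 har.1 h1 h2⟩
  · -- degree bound
    have hcompact : IsCompact (Metric.closedBall (0:EuclideanSpace ℝ (Fin d)) 1) :=
      isCompact_closedBall _ _
    have htb := hcompact.totallyBounded
    rw [Metric.totallyBounded_iff] at htb
    obtain ⟨t, htf, hcov⟩ := htb (1/2) (by norm_num)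
    refine ⟨t.ncard, fun S hdist p hp => ?_⟩
    classical
    set f : EuclideanSpace ℝ (Fin d) → EuclideanSpace ℝ (Fin d) :=
      fun x => ‖x - p‖⁻¹ • (x - p) with hf
    set N := {x | x ∈ S ∧ rngAdj S p x} with hN
    have hmem : ∀ x ∈ N, x - p ≠ 0 ∧ f x ∈ Metric.closedBall (0:EuclideanSpace ℝ (Fin d)) 1 := by
      intro x hx
      have hxp : x - p ≠ 0 := sub_ne_zero.2 (fun h => hx.2.1 h.symm)
      refine ⟨hxp, ?_⟩
      have : ‖f x‖ = 1 := by
        simp [hf, norm_smul, abs_of_pos (inv_pos.2 (norm_pos_iff.2 hxp)),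
          inv_mul_cancel₀ (norm_pos_iff.2 hxp).ne']
      simp [Metric.mem_closedBall, dist_zero_right, this]
    have hg : ∀ x ∈ N, ∃ y ∈ t, f x ∈ Metric.ball y (1/2) := by
      intro x hx
      have := hcov (hmem x hx).2
      simpa using this
    set g : EuclideanSpace ℝ (Fin d) → EuclideanSpace ℝ (Fin d) :=
      fun x => if h : ∃ y ∈ t, f x ∈ Metric.ball y (1/2) then h.choose else 0 with hgdef
    have hgt : ∀ x ∈ N, g x ∈ t ∧ dist (f x) (g x) < 1/2 := by
      intro x hx
      have h := hg x hx
      simp only [hgdef, dif_pos h]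
      exact ⟨h.choose_spec.1, by simpa [Metric.mem_ball] using h.choose_spec.2⟩
    refine Set.ncard_le_ncard_of_injOn g (fun x hx => (hgt x hx).1) ?_ htf
    intro x hx y hy hxy
    · 
      by_contra hne
      have hlong := rng_longest S hdist p hp x hx.1 y hy.1 hx.2 hy.2 hne
      have hcos := rng_cos_lt_half p x y hx.2.1 hy.2.1 hlong.1 hlong.2
      rw [rng_angle_eq] at hcos
      have hsep := rng_sep (x - p) (y - p) (hmem x hx).1 (hmem y hy).1 hcos
      have d1 := (hgt x hx).2
      have d2 := (hgt y hy).2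
      rw [hxy] at d1
      have htri : dist (f x) (f y) ≤ dist (f x) (g y) + dist (g y) (f y) := dist_triangle _ _ _
      rw [dist_comm (g y) (f y)] at htri
      have hlt : dist (f x) (f y) < 1 := by linarith
      exact absurd hsep (by simpa [hf] using hlt.not_gt)
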